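/- Let Q be the contact-rate matrix of the star on n > 1 nodes with hub 1, and let α ∈ (1/2,1] with (2α−1)n a positive integer and (2α−1)n < n. Then δ(Q,α) = (n/(2(n−1)))·(1 − √(1 − 4(2α−1)/n)), and this quantity is at least (2α−1)/n. -/

import Mathlib

open Matrix Finset Real

/-- The matrix `Q_S`. -/
noncomputable def QS {n : ℕ} (Q : Matrix (Fin n) (Fin n) ℝ) (S : Finset (Fin n)) :
    Matrix (Fin n) (Fin n) ℝ :=
  fun i j => if i = j then -(∑ l, Q i l) else if i ∈ S then 0 else Q i j

/-- The largest (real) eigenvalue of a matrix. -/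
noncomputable def lambdaMax {n : ℕ} (M : Matrix (Fin n) (Fin n) ℝ) : ℝ :=
  sSup {μ : ℝ | ∃ x : Fin n → ℝ, x ≠ 0 ∧ M.mulVec x = μ • x}

/-- The contact rate matrix of the star on `n` nodes with hub node `1` (index `0`). -/
noncomputable def Qstar (n : ℕ) : Matrix (Fin n) (Fin n) ℝ :=
  fun i j => if ((i : ℕ) = 0 ∧ (j : ℕ) ≠ 0) ∨ ((j : ℕ) = 0 ∧ (i : ℕ) ≠ 0)
    then 1 / ((n : ℝ) - 1) else 0


lemma n1pos {n : ℕ} (hn : 2 ≤ n) : (0:ℝ) < (n:ℝ) - 1 := by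
  have : (2:ℝ) ≤ (n:ℝ) := by exact_mod_cast hn
  linarith

lemma rowsum {n : ℕ} (hn : 2 ≤ n) (i : Fin n) :
    ∑ l, Qstar n i l = if (i:ℕ) = 0 then 1 else 1/((n:ℝ)-1) := by
  have hpos := n1pos hn
  have h0 : (0:ℕ) < n := by omega
  set i0 : Fin n := ⟨0, h0⟩ with hi0
  by_cases hi : (i:ℕ) = 0
  · simp only [hi, if_true]
    have h1 : ∀ l : Fin n, Qstar n i l = if l = i0 then 0 else 1/((n:ℝ)-1) := by
      intro l
      unfold Qstar
      by_cases hl : l = i0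
      · simp [hl, hi0, hi]
      · have hl0 : (l:ℕ) ≠ 0 := fun h => hl (Fin.ext h)
        simp [hi, hl0, hl]
    rw [Finset.sum_congr rfl (fun l _ => h1 l)]
    rw [← Finset.add_sum_erase _ _ (Finset.mem_univ i0)]
    rw [if_pos rfl]
    rw [Finset.sum_congr rfl (fun l hl => if_neg (Finset.ne_of_mem_erase hl))]
    rw [Finset.sum_const, Finset.card_erase_of_mem (Finset.mem_univ i0)]
    simp only [Finset.card_univ, Fintype.card_fin, nsmul_eq_mul]
    have : ((n - 1 : ℕ) : ℝ) = (n:ℝ) - 1 := by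
      have : (1:ℕ) ≤ n := by omega
      push_cast [this]; ring
    rw [this]
    field_simp
    norm_num
  · simp only [hi, if_false]
    have h1 : ∀ l : Fin n, Qstar n i l = if l = i0 then 1/((n:ℝ)-1) else 0 := by
      intro l
      unfold Qstar
      by_cases hl : l = i0
      · simp [hl, hi0, hi]
      · have hl0 : (l:ℕ) ≠ 0 := fun h => hl (Fin.ext h)
        simp [hi, hl0, hl]
    rw [Finset.sum_congr rfl (fun l _ => h1 l)]
    simp

lemma mulVecQS {n : ℕ} (hn : 2 ≤ n) (S : Finset (Fin n)) (x : Fin n → ℝ) (i : Fin n) :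
    (QS (Qstar n) S).mulVec x i =
      if (i:ℕ) = 0 then
        -x i + (if i ∈ S then 0 else (1/((n:ℝ)-1)) * ∑ j ∈ univ.erase i, x j)
      else -((1/((n:ℝ)-1)) * x i) +
        (if i ∈ S then 0 else (1/((n:ℝ)-1)) * x ⟨0, by omega⟩) := by
  have h0 : (0:ℕ) < n := by omega
  set i0 : Fin n := ⟨0, h0⟩ with hi0
  have hmv : (QS (Qstar n) S).mulVec x i
      = ∑ j, (QS (Qstar n) S) i j * x j := rfl
  rw [hmv, ← Finset.add_sum_erase _ _ (Finset.mem_univ i)]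
  have hdiag : (QS (Qstar n) S) i i = -(if (i:ℕ) = 0 then 1 else 1/((n:ℝ)-1)) := by
    unfold QS; rw [if_pos rfl, rowsum hn]
  have hoff : ∀ j ∈ univ.erase i, (QS (Qstar n) S) i j * x j
      = (if i ∈ S then 0 else Qstar n i j * x j) := by
    intro j hj
    have hij : i ≠ j := (Finset.ne_of_mem_erase hj).symm
    unfold QS
    rw [if_neg hij]
    by_cases hiS : i ∈ S <;> simp [hiS]
  rw [Finset.sum_congr rfl hoff, hdiag]
  by_cases hi : (i:ℕ) = 0
  · rw [if_pos hi, if_pos hi]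
    by_cases hiS : i ∈ S
    · simp [hiS]
    · simp only [hiS, if_false]
      have hii0 : i = i0 := Fin.ext hi
      have : ∀ j ∈ univ.erase i, Qstar n i j * x j = (1/((n:ℝ)-1)) * x j := by
        intro j hj
        have hji : j ≠ i := Finset.ne_of_mem_erase hj
        have hj0 : (j:ℕ) ≠ 0 := fun h => hji (by rw [hii0]; exact Fin.ext h)
        unfold Qstar
        simp [hi, hj0]
      rw [Finset.sum_congr rfl this, ← Finset.mul_sum]; ring
  · rw [if_neg hi, if_neg hi]
    by_cases hiS : i ∈ S
    · simp [hiS]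
    · simp only [hiS, if_false]
      have : ∀ j ∈ univ.erase i, Qstar n i j * x j
          = if j = i0 then (1/((n:ℝ)-1)) * x j else 0 := by
        intro j hj
        by_cases hji0 : j = i0
        · have : (j:ℕ) = 0 := by rw [hji0]
          unfold Qstar; simp [hji0, hi, this, hi0]
        · have hj0 : (j:ℕ) ≠ 0 := fun h => hji0 (Fin.ext h)
          unfold Qstar; simp [hi, hj0, hji0]
      rw [Finset.sum_congr rfl this, Finset.sum_ite_eq' (univ.erase i) i0]
      have hi0mem : i0 ∈ univ.erase i := by
        refine Finset.mem_erase.mpr ⟨?_, Finset.mem_univ _⟩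
        exact fun h => hi (by rw [← h])
      rw [if_pos hi0mem]; ring

noncomputable def lamb (n k : ℕ) : ℝ :=
  (Real.sqrt ((n:ℝ)^2 - 4*k) - n) / (2*((n:ℝ)-1))

section facts
variable {n k : ℕ}

lemma disc_nonneg (hn : 2 ≤ n) (hkn : k < n) : (0:ℝ) ≤ (n:ℝ)^2 - 4*k := by
  have h1 : (k:ℝ) ≤ (n:ℝ) - 1 := by
    have : (k:ℝ) + 1 ≤ (n:ℝ) := by exact_mod_cast hkn
    linarith
  have h2 : (2:ℝ) ≤ (n:ℝ) := by exact_mod_cast hn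
  nlinarith

lemma sqrt_sq' (hn : 2 ≤ n) (hkn : k < n) : (Real.sqrt ((n:ℝ)^2 - 4*k))^2 = (n:ℝ)^2 - 4*k :=
  Real.sq_sqrt (disc_nonneg hn hkn)

lemma sqrt_le_n (hn : 2 ≤ n) : Real.sqrt ((n:ℝ)^2 - 4*k) ≤ (n:ℝ) := by
  have h := Real.sqrt_le_sqrt (show (n:ℝ)^2 - 4*k ≤ (n:ℝ)^2 by
    have : (0:ℝ) ≤ (k:ℝ) := Nat.cast_nonneg k
    linarith)
  calc Real.sqrt ((n:ℝ)^2 - 4*k) ≤ Real.sqrt ((n:ℝ)^2) := h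
    _ = n := by rw [Real.sqrt_sq (Nat.cast_nonneg n)]

lemma n2_le_sqrt (hn : 2 ≤ n) (hkn : k < n) : (n:ℝ) - 2 ≤ Real.sqrt ((n:ℝ)^2 - 4*k) := by
  have h1 : (k:ℝ) ≤ (n:ℝ) - 1 := by
    have : (k:ℝ) + 1 ≤ (n:ℝ) := by exact_mod_cast hkn
    linarith
  have h2 : ((n:ℝ)-2)^2 ≤ (n:ℝ)^2 - 4*k := by nlinarith
  have h3 : (0:ℝ) ≤ (n:ℝ) - 2 := by
    have : (2:ℝ) ≤ (n:ℝ) := by exact_mod_cast hn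
    linarith
  calc (n:ℝ) - 2 = Real.sqrt (((n:ℝ)-2)^2) := (Real.sqrt_sq h3).symm
    _ ≤ Real.sqrt ((n:ℝ)^2 - 4*k) := Real.sqrt_le_sqrt h2

lemma lamb_neg (hn : 2 ≤ n) (hk : 0 < k) (hkn : k < n) : lamb n k < 0 := by
  have h1 : Real.sqrt ((n:ℝ)^2 - 4*k) < n := by
    have hsq := sqrt_sq' hn hkn
    have hge := Real.sqrt_nonneg ((n:ℝ)^2 - 4*k)
    have hkpos : (0:ℝ) < k := by exact_mod_cast hk
    have hnpos : (0:ℝ) < n := by positivity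
    nlinarith
  have h2 := n1pos hn
  unfold lamb
  apply div_neg_of_neg_of_pos <;> linarith

lemma lamb_ge (hn : 2 ≤ n) (hkn : k < n) : -(1/((n:ℝ)-1)) ≤ lamb n k := by
  have h1 := n2_le_sqrt hn hkn
  have h2 := n1pos hn
  unfold lamb
  rw [le_div_iff₀ (by linarith : (0:ℝ) < 2*((n:ℝ)-1))]
  have he : -(1/((n:ℝ)-1)) * (2*((n:ℝ)-1)) = -2 := by field_simp
  rw [he]; linarith

lemma lamb_quad (hn : 2 ≤ n) (hkn : k < n) : ((lamb n k)+1)*((lamb n k)+1/((n:ℝ)-1)) = ((n:ℝ)-1-k)*(1/((n:ℝ)-1))^2 := by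
  have hs2 := sqrt_sq' hn hkn
  have h2 := n1pos hn
  have hne : (n:ℝ) - 1 ≠ 0 := ne_of_gt h2
  have hne2 : 2*((n:ℝ)-1) ≠ 0 := by positivity
  set s := Real.sqrt ((n:ℝ)^2 - 4*k) with hsdef
  have e1 : lamb n k + 1 = (s + (n:ℝ) - 2)/(2*((n:ℝ)-1)) := by
    unfold lamb; field_simp; ring
  have e2 : lamb n k + 1/((n:ℝ)-1) = (s - (n:ℝ) + 2)/(2*((n:ℝ)-1)) := by
    unfold lamb; field_simp; ring
  rw [e1, e2, div_mul_div_comm]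
  field_simp
  linear_combination hs2

end facts

lemma beta_le_one {n : ℕ} (hn : 2 ≤ n) : 1/((n:ℝ)-1) ≤ 1 := by
  have h2 : (2:ℝ) ≤ (n:ℝ) := by exact_mod_cast hn
  rw [div_le_one (by linarith)]; linarith

lemma greatest_hub {n : ℕ} (hn : 2 ≤ n) (S : Finset (Fin n))
    (hS : (⟨0, by omega⟩ : Fin n) ∈ S) :
    IsGreatest {μ : ℝ | ∃ x : Fin n → ℝ, x ≠ 0 ∧ (QS (Qstar n) S).mulVec x = μ • x}
      (-(1/((n:ℝ)-1))) := by
  have h0 : (0:ℕ) < n := by omega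
  set β : ℝ := 1/((n:ℝ)-1) with hβ
  have hβpos : 0 < β := by rw [hβ]; exact div_pos one_pos (n1pos hn)
  have hβ1 := beta_le_one hn
  set i0 : Fin n := ⟨0, h0⟩ with hi0
  set i1 : Fin n := ⟨1, by omega⟩ with hi1
  have hi01 : i1 ≠ i0 := by simp [hi0, hi1, Fin.ext_iff]
  constructor
  · -- membership: eigenvector e_{i1}
    refine ⟨fun j => if j = i1 then 1 else 0, ?_, ?_⟩
    · intro h
      have := congrFun h i1
      simp at this
    · funext i
      rw [mulVecQS hn]
      have hx0 : (if i0 = i1 then (1:ℝ) else 0) = 0 := if_neg (fun h => hi01 h.symm)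
      by_cases hi : (i:ℕ) = 0
      · have hii0 : i = i0 := Fin.ext hi
        rw [if_pos hi]
        subst hii0
        rw [if_pos hS]
        simp only [Pi.smul_apply, smul_eq_mul]
        rw [hx0]; ring
      · rw [if_neg hi]
        have h0eq : (⟨0, by omega⟩ : Fin n) = i0 := rfl
        rw [h0eq, hx0, mul_zero]
        simp only [Pi.smul_apply, smul_eq_mul]
        by_cases hiS : i ∈ S
        · rw [if_pos hiS]; ring
        · rw [if_neg hiS]; ring
  · -- upper bound
    rintro μ ⟨x, hx, hMx⟩
    by_contra hgt
    push_neg at hgt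
    have hμβ : 0 < μ + β := by linarith
    have hμ1 : 0 < μ + 1 := by linarith
    apply hx
    have key : ∀ i, x i = 0 := by
      have hx0 : x i0 = 0 := by
        have h := congrFun hMx i0
        rw [mulVecQS hn] at h
        have : ((i0:Fin n):ℕ) = 0 := rfl
        rw [if_pos this, if_pos hS] at h
        simp only [Pi.smul_apply, smul_eq_mul] at h
        have : (μ + 1) * x i0 = 0 := by linarith
        exact (mul_eq_zero.mp this).elim (fun h => absurd h (by linarith)) id
      intro i
      by_cases hii : (i:ℕ) = 0
      · have hii0 : i = i0 := Fin.ext hii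
        rwa [hii0]
      · have h := congrFun hMx i
        rw [mulVecQS hn] at h
        rw [if_neg hii] at h
        simp only [Pi.smul_apply, smul_eq_mul] at h
        have h0eq : (⟨0, by omega⟩ : Fin n) = i0 := rfl
        rw [h0eq, hx0] at h
        by_cases hiS : i ∈ S
        · rw [if_pos hiS] at h
          have : (μ + β) * x i = 0 := by linarith
          exact (mul_eq_zero.mp this).elim (fun h => absurd h (by linarith)) id
        · rw [if_neg hiS] at h
          have : (μ + β) * x i = 0 := by rw [mul_zero] at h; linarith
          exact (mul_eq_zero.mp this).elim (fun h => absurd h (by linarith)) id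
    funext i; exact key i

lemma lamb_add_pos {n k : ℕ} (hn : 2 ≤ n) (hklt : k < n - 1) :
    0 < lamb n k + 1/((n:ℝ)-1) := by
  have h2 : (2:ℝ) ≤ (n:ℝ) := by exact_mod_cast hn
  have hk1 : (k:ℝ) < (n:ℝ) - 1 := by
    have : (k:ℝ) + 1 ≤ ((n:ℕ):ℝ) - 1 := by
      have : k + 1 ≤ n - 1 := hklt
      have h3 : (k:ℝ) + 1 ≤ ((n-1:ℕ):ℝ) := by exact_mod_cast this
      have h4 : ((n-1:ℕ):ℝ) = (n:ℝ) - 1 := by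
        have : (1:ℕ) ≤ n := by omega
        push_cast [this]; ring
      linarith [h4 ▸ h3]
    linarith
  have hs : (n:ℝ) - 2 < Real.sqrt ((n:ℝ)^2 - 4*k) := by
    have hsq : (Real.sqrt ((n:ℝ)^2 - 4*k))^2 = (n:ℝ)^2 - 4*k := by
      apply Real.sq_sqrt; nlinarith [Nat.cast_nonneg (α := ℝ) k]
    have hge := Real.sqrt_nonneg ((n:ℝ)^2 - 4*k)
    nlinarith
  have hpos := n1pos hn
  unfold lamb
  rw [div_add_div _ _ (by linarith) (by linarith : (n:ℝ)-1 ≠ 0)]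
  apply div_pos
  · nlinarith
  · nlinarith

lemma lamb_eq_neg_beta {n : ℕ} (hn : 2 ≤ n) :
    lamb n (n-1) = -(1/((n:ℝ)-1)) := by
  have h2 : (2:ℝ) ≤ (n:ℝ) := by exact_mod_cast hn
  have hcast : ((n-1:ℕ):ℝ) = (n:ℝ) - 1 := by
    have : (1:ℕ) ≤ n := by omega
    push_cast [this]; ring
  have hd : (n:ℝ)^2 - 4*((n-1:ℕ):ℝ) = ((n:ℝ)-2)^2 := by rw [hcast]; ring
  unfold lamb
  rw [hd, Real.sqrt_sq (by linarith)]
  have hpos := n1pos hn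
  rw [div_eq_iff (by linarith : 2*((n:ℝ)-1) ≠ 0)]
  field_simp
  ring

lemma card_cast_aux {n k : ℕ} (hkn : k ≤ n - 1) (hn : 2 ≤ n) :
    ((n - 1 - k : ℕ):ℝ) = (n:ℝ) - 1 - k := by
  have h2 : 1 + k ≤ n := by omega
  push_cast [Nat.sub_sub, h2]
  ring

lemma greatest_nohub {n k : ℕ} (hn : 2 ≤ n) (hk : 0 < k) (hkn : k < n)
    (S : Finset (Fin n)) (hcard : S.card = k)
    (hS : (⟨0, by omega⟩ : Fin n) ∉ S) :
    IsGreatest {μ : ℝ | ∃ x : Fin n → ℝ, x ≠ 0 ∧ (QS (Qstar n) S).mulVec x = μ • x}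
      (lamb n k) := by
  have h0 : (0:ℕ) < n := by omega
  set β : ℝ := 1/((n:ℝ)-1) with hβ
  have hpos := n1pos hn
  have hβpos : 0 < β := by rw [hβ]; exact div_pos one_pos hpos
  have hβ1 : β ≤ 1 := beta_le_one hn
  set i0 : Fin n := ⟨0, h0⟩ with hi0
  have hSi0 : i0 ∉ S := hS
  have hsub : S ⊆ univ.erase i0 := by
    intro j hj
    exact Finset.mem_erase.mpr ⟨fun h => hSi0 (h ▸ hj), Finset.mem_univ j⟩
  have hcarde : (univ.erase i0).card = n - 1 := by
    rw [Finset.card_erase_of_mem (Finset.mem_univ i0), Finset.card_univ, Fintype.card_fin]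
  have hkle : k ≤ n - 1 := by
    have := Finset.card_le_card hsub
    rw [hcard, hcarde] at this; exact this
  have hcards : (univ.erase i0 \ S).card = n - 1 - k := by
    rw [Finset.card_sdiff_of_subset hsub, hcard, hcarde]
  have hcastnk : ((n - 1 - k : ℕ):ℝ) = (n:ℝ) - 1 - k := card_cast_aux hkle hn
  have hquadl := lamb_quad hn hkn
  have hlge := lamb_ge hn hkn
  have hβn : β * ((n:ℝ)-1) = 1 := by rw [hβ]; field_simp
  have h0eq : (⟨0, by omega⟩ : Fin n) = i0 := rfl
  constructor
  · -- lamb is an eigenvalue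
    rcases Nat.lt_or_ge k (n-1) with hklt | hkge
    · -- k < n-1
      have hlab : 0 < lamb n k + β := by
        rw [hβ]; exact lamb_add_pos hn hklt
      set x : Fin n → ℝ := fun j => if j = i0 then lamb n k + β else if j ∈ S then 0 else β
        with hxdef
      have hx0 : x i0 = lamb n k + β := by rw [hxdef]; simp
      have hxSv : ∀ j ∈ S, x j = 0 := by
        intro j hj
        have hji0 : j ≠ i0 := fun h => hSi0 (h ▸ hj)
        rw [hxdef]; simp [hji0, hj]
      have hxLv : ∀ j, j ≠ i0 → j ∉ S → x j = β := by
        intro j h1 h2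
        rw [hxdef]; simp [h1, h2]
      refine ⟨x, ?_, ?_⟩
      · intro h
        have := congrFun h i0
        rw [hx0] at this
        simp only [Pi.zero_apply] at this
        linarith
      · funext i
        rw [mulVecQS hn, h0eq]
        simp only [Pi.smul_apply, smul_eq_mul]
        by_cases hii : (i:ℕ) = 0
        · have hii0 : i = i0 := Fin.ext hii
          rw [if_pos hii, hii0, hx0, if_neg hSi0]
          have hsum : ∑ j ∈ univ.erase i0, x j = ((n:ℝ) - 1 - k) * β := by
            rw [← Finset.sum_sdiff hsub]
            have t1 : ∑ j ∈ S, x j = 0 :=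
              Finset.sum_eq_zero (fun j hj => hxSv j hj)
            have t2 : ∑ j ∈ univ.erase i0 \ S, x j = ((n:ℝ) - 1 - k) * β := by
              rw [Finset.sum_congr rfl (fun j hj => by
                obtain ⟨h1, h2⟩ := Finset.mem_sdiff.mp hj
                exact hxLv j (Finset.ne_of_mem_erase h1) h2)]
              rw [Finset.sum_const, hcards, nsmul_eq_mul, hcastnk]
            rw [t1, t2, add_zero]
          rw [hsum]
          rw [hβ] at *
          linear_combination -hquadl
        · rw [if_neg hii]
          have hii0 : i ≠ i0 := fun h => hii (by rw [h])
          rw [hx0]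
          by_cases hiS : i ∈ S
          · rw [if_pos hiS, hxSv i hiS]; ring
          · rw [if_neg hiS, hxLv i hii0 hiS]; ring
    · -- k = n-1
      have hkeq : k = n - 1 := le_antisymm hkle hkge
      have hSeq : S = univ.erase i0 := by
        apply Finset.eq_of_subset_of_card_le hsub
        rw [hcard, hcarde, hkeq]
      have hleq : lamb n k = -β := by rw [hkeq, hβ]; exact lamb_eq_neg_beta hn
      set x : Fin n → ℝ := fun j => if j = i0 then 1 else 1 - β with hxdef
      have hx0 : x i0 = 1 := by rw [hxdef]; simp
      have hxv : ∀ j, j ≠ i0 → x j = 1 - β := by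
        intro j h1; rw [hxdef]; simp [h1]
      refine ⟨x, ?_, ?_⟩
      · intro h
        have := congrFun h i0
        rw [hx0] at this
        simp only [Pi.zero_apply] at this
        exact one_ne_zero this
      · funext i
        rw [mulVecQS hn, h0eq]
        simp only [Pi.smul_apply, smul_eq_mul]
        by_cases hii : (i:ℕ) = 0
        · have hii0 : i = i0 := Fin.ext hii
          rw [if_pos hii, hii0, hx0, if_neg hSi0]
          have hsum : ∑ j ∈ univ.erase i0, x j = ((n:ℝ) - 1) * (1 - β) := by
            rw [Finset.sum_congr rfl (fun j hj => hxv j (Finset.ne_of_mem_erase hj))]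
            rw [Finset.sum_const, hcarde, nsmul_eq_mul]
            have hc : ((n - 1 : ℕ):ℝ) = (n:ℝ) - 1 := by
              have : (1:ℕ) ≤ n := by omega
              push_cast [this]; ring
            rw [hc]
          rw [hsum, hleq]
          linear_combination (1 - β) * hβn
        · rw [if_neg hii]
          have hii0 : i ≠ i0 := fun h => hii (by rw [h])
          have hiS : i ∈ S := by
            rw [hSeq]; exact Finset.mem_erase.mpr ⟨hii0, Finset.mem_univ i⟩
          rw [if_pos hiS, hxv i hii0, hleq]
          ring
  · -- upper bound
    rintro μ ⟨x, hx, hMx⟩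
    by_contra hgt
    push_neg at hgt
    have hμβ : 0 < μ + β := by linarith
    have hxS : ∀ i ∈ S, x i = 0 := by
      intro i hiS
      have h := congrFun hMx i
      have hii : (i:ℕ) ≠ 0 := by
        intro h0'
        exact hSi0 ((Fin.ext h0' : i = i0) ▸ hiS)
      rw [mulVecQS hn, if_neg hii, if_pos hiS] at h
      simp only [Pi.smul_apply, smul_eq_mul] at h
      have hz : (μ + β) * x i = 0 := by linarith
      exact (mul_eq_zero.mp hz).elim (fun h' => absurd h' (by linarith)) id
    have hxL : ∀ i, i ≠ i0 → i ∉ S → (μ + β) * x i = β * x i0 := by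
      intro i hii0 hiS
      have h := congrFun hMx i
      have hii : (i:ℕ) ≠ 0 := fun h0' => hii0 (Fin.ext h0')
      rw [mulVecQS hn, if_neg hii, if_neg hiS, h0eq] at h
      simp only [Pi.smul_apply, smul_eq_mul] at h
      have : β = 1/((n:ℝ)-1) := hβ
      linarith [h]
    have hx0ne : x i0 ≠ 0 := by
      intro hx0
      apply hx
      funext i
      show x i = 0
      by_cases hii0 : i = i0
      · rw [hii0, hx0]
      · by_cases hiS : i ∈ S
        · exact hxS i hiS
        · have h' := hxL i hii0 hiS
          rw [hx0, mul_zero] at h'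
          rcases mul_eq_zero.mp h' with h'' | h''
          · exact absurd h'' (by linarith)
          · exact h''
    have h := congrFun hMx i0
    rw [mulVecQS hn, if_pos rfl, if_neg hSi0] at h
    simp only [Pi.smul_apply, smul_eq_mul] at h
    have hsum : (μ + β) * ∑ j ∈ univ.erase i0, x j = ((n:ℝ) - 1 - k) * (β * x i0) := by
      rw [Finset.mul_sum, ← Finset.sum_sdiff hsub]
      have t1 : ∑ j ∈ S, (μ + β) * x j = 0 :=
        Finset.sum_eq_zero (fun j hj => by rw [hxS j hj, mul_zero])
      have t2 : ∑ j ∈ univ.erase i0 \ S, (μ + β) * x j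
          = ((n:ℝ) - 1 - k) * (β * x i0) := by
        rw [Finset.sum_congr rfl (fun j hj => by
          obtain ⟨h1, h2⟩ := Finset.mem_sdiff.mp hj
          exact hxL j (Finset.ne_of_mem_erase h1) h2)]
        rw [Finset.sum_const, hcards, nsmul_eq_mul, hcastnk]
      rw [t1, t2, add_zero]
    have e1 : β * ∑ j ∈ univ.erase i0, x j = (μ + 1) * x i0 := by
      rw [hβ] at *
      linear_combination h
    have hquadμ : ((μ+1)*(μ+β)) * x i0 = (((n:ℝ)-1-k) * β^2) * x i0 := by
      calc ((μ+1)*(μ+β)) * x i0 = (μ + β) * ((μ + 1) * x i0) := by ring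
        _ = (μ + β) * (β * ∑ j ∈ univ.erase i0, x j) := by rw [e1]
        _ = β * ((μ + β) * ∑ j ∈ univ.erase i0, x j) := by ring
        _ = β * (((n:ℝ) - 1 - k) * (β * x i0)) := by rw [hsum]
        _ = (((n:ℝ)-1-k) * β^2) * x i0 := by ring
    have hquadμ' : (μ+1)*(μ+β) = ((n:ℝ)-1-k) * β^2 :=
      mul_right_cancel₀ hx0ne hquadμ
    have hfact : (μ - lamb n k) * (μ + lamb n k + 1 + β) = 0 := by
      rw [hβ] at *
      linear_combination hquadμ' - hquadl
    have hf1 : 0 < μ - lamb n k := by linarith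
    have hf2 : 0 < μ + lamb n k + 1 + β := by linarith
    nlinarith [hfact]


/-- For the star on `n > 1` nodes and `α ∈ (1/2,1]` with `(2α-1)n` a positive integer `< n`:
`δ(Q,α) = (n/(2(n-1)))(1 - √(1 - 4(2α-1)/n)) ≥ (2α-1)/n`. -/
theorem stmt14 (n : ℕ) (hn : 2 ≤ n) (α : ℝ) (hα : 1/2 < α) (hα1 : α ≤ 1)
    (k : ℕ) (hk : 0 < k) (hkn : k < n) (hkα : (k : ℝ) = (2*α - 1) * n) :
    sInf {x : ℝ | ∃ S : Finset (Fin n), S.card = k ∧ x = |lambdaMax (QS (Qstar n) S)|}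
      = ((n : ℝ) / (2 * ((n : ℝ) - 1))) * (1 - Real.sqrt (1 - 4 * (2*α - 1) / (n : ℝ))) ∧
    (2*α - 1) / (n : ℝ)
      ≤ ((n : ℝ) / (2 * ((n : ℝ) - 1))) * (1 - Real.sqrt (1 - 4 * (2*α - 1) / (n : ℝ))) := by
  have h0 : (0:ℕ) < n := by omega
  have hpos := n1pos hn
  have hnne : (n:ℝ) ≠ 0 := by positivity
  have hnpos : (0:ℝ) < n := by positivity
  set i0 : Fin n := ⟨0, h0⟩ with hi0
  set s : ℝ := Real.sqrt ((n:ℝ)^2 - 4*k) with hsdef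
  have hs2 : s^2 = (n:ℝ)^2 - 4*k := sqrt_sq' hn hkn
  have hs0 : 0 ≤ s := Real.sqrt_nonneg _
  have hsn : s ≤ n := sqrt_le_n hn
  have hα' : 2*α - 1 = (k:ℝ)/(n:ℝ) := by
    rw [eq_div_iff hnne]; linarith [hkα]
  -- the target equals - lamb n k
  have htarget : ((n : ℝ) / (2 * ((n : ℝ) - 1))) * (1 - Real.sqrt (1 - 4 * (2*α - 1) / (n : ℝ)))
      = - lamb n k := by
    have h1 : (1:ℝ) - 4 * (2*α - 1) / (n : ℝ) = ((n:ℝ)^2 - 4*k)/(n:ℝ)^2 := by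
      rw [hα']; field_simp
    rw [h1, Real.sqrt_div (by nlinarith [hs2] : (0:ℝ) ≤ (n:ℝ)^2 - 4*k),
      Real.sqrt_sq (le_of_lt hnpos)]
    unfold lamb
    rw [← hsdef]
    field_simp
    ring
  have hlneg := lamb_neg hn hk hkn
  have hlge := lamb_ge hn hkn
  -- a witness set avoiding the hub
  obtain ⟨S₀, hS₀sub, hS₀card⟩ := Finset.exists_subset_card_eq (s := univ.erase i0) (n := k)
    (by rw [Finset.card_erase_of_mem (Finset.mem_univ i0), Finset.card_univ,
            Fintype.card_fin]; omega)
  have hS₀i0 : (⟨0, by omega⟩ : Fin n) ∉ S₀ := by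
    intro h
    exact (Finset.mem_erase.mp (hS₀sub h)).1 rfl
  have hmem : - lamb n k ∈ {x : ℝ | ∃ S : Finset (Fin n), S.card = k ∧
      x = |lambdaMax (QS (Qstar n) S)|} := by
    refine ⟨S₀, hS₀card, ?_⟩
    have := (greatest_nohub hn hk hkn S₀ hS₀card hS₀i0).csSup_eq
    show - lamb n k = |sSup _|
    rw [this, abs_of_neg hlneg]
  have hlb : ∀ b ∈ {x : ℝ | ∃ S : Finset (Fin n), S.card = k ∧
      x = |lambdaMax (QS (Qstar n) S)|}, - lamb n k ≤ b := by
    rintro b ⟨S, hScard, rfl⟩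
    by_cases hhub : (⟨0, by omega⟩ : Fin n) ∈ S
    · have := (greatest_hub hn S hhub).csSup_eq
      show - lamb n k ≤ |sSup _|
      rw [this, abs_of_neg (by
        have := n1pos hn
        have : 0 < 1/((n:ℝ)-1) := by positivity
        linarith : -(1/((n:ℝ)-1)) < 0)]
      simp only [neg_neg]
      linarith
    · have := (greatest_nohub hn hk hkn S hScard hhub).csSup_eq
      show - lamb n k ≤ |sSup _|
      rw [this, abs_of_neg hlneg]
  constructor
  · rw [htarget]
    apply le_antisymm
    · exact csInf_le ⟨0, fun b hb => by
        obtain ⟨S, _, rfl⟩ := hb; exact abs_nonneg _⟩ hmem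
    · exact le_csInf ⟨_, hmem⟩ hlb
  · rw [htarget, hα']
    have hgoal : (k:ℝ)/(n:ℝ)/(n:ℝ) = (k:ℝ)/(n:ℝ)^2 := by ring
    rw [hgoal]
    unfold lamb
    rw [← hsdef, show -((s - (n:ℝ))/(2*((n:ℝ)-1))) = ((n:ℝ) - s)/(2*((n:ℝ)-1)) by ring]
    rw [div_le_div_iff₀ (by positivity) (by linarith)]
    nlinarith [hs2, hsn, hs0, mul_pos hnpos hnpos, (show (1:ℝ) ≤ (k:ℝ) by exact_mod_cast hk),
      mul_nonneg (sub_nonneg.mpr hsn) hs0]
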